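/- Let d ≥ 1 and let ρ be a symmetric non-degenerate probability measure on ℝ^d (ρ(H) < 1 for every affine hyperplane H). Then for every nonzero s ∈ ℝ^d, ∫_{ℝ^d} exp(⟨s,z⟩ − ⟨s,z⟩²/2) dρ(z) < 1; equivalently, Λ(s, −(1/2) s ᵗs) < 0 where Λ(u,A) = ln ∫_{ℝ^d} exp(⟨u,z⟩ + ⟨Az,z⟩) dρ(z). -/

import Mathlib

open MeasureTheory Filter Matrix Real

noncomputable section

/-- `T_n(x) = ∑ i, x_i ᵗx_i`. -/
def Tmat (d n : ℕ) (x : Fin n → Fin d → ℝ) : Matrix (Fin d) (Fin d) ℝ :=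
  ∑ i, Matrix.vecMulVec (x i) (x i)

/-- `S_n(x) = x_1 + … + x_n`. -/
def Svec (d n : ℕ) (x : Fin n → Fin d → ℝ) : Fin d → ℝ := ∑ i, x i

/-- the Hamiltonian `(1/2)⟨T_n⁻¹ S_n, S_n⟩`. -/
def Hfun (d n : ℕ) (x : Fin n → Fin d → ℝ) : ℝ :=
  (1 / 2) * dotProduct ((Tmat d n x)⁻¹.mulVec (Svec d n x)) (Svec d n x)

/-- normalization constant `Z_n`. -/
def Zconst (d : ℕ) (ρ : Measure (Fin d → ℝ)) (n : ℕ) : ℝ :=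
  ∫ x : Fin n → Fin d → ℝ,
    Set.indicator {x | 0 < (Tmat d n x).det} (fun x => Real.exp (Hfun d n x)) x
    ∂ Measure.pi fun _ => ρ

/-- the Curie-Weiss model of SOC `μ̃_{n,ρ}`. -/
def CW (d : ℕ) (ρ : Measure (Fin d → ℝ)) (n : ℕ) : Measure (Fin n → Fin d → ℝ) :=
  (Measure.pi fun _ => ρ).withDensity fun x =>
    Set.indicator {x | 0 < (Tmat d n x).det}
      (fun x => ENNReal.ofReal (Real.exp (Hfun d n x) / Zconst d ρ n)) x

/-- covariance matrix `Σ = ∫ z ᵗz dρ(z)`. -/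
def covM (d : ℕ) (ρ : Measure (Fin d → ℝ)) : Matrix (Fin d) (Fin d) ℝ :=
  Matrix.of fun i j => ∫ z, z i * z j ∂ρ

/-- `M₄(z) = ∑ (∫ yᵢyⱼyₖyₗ dρ) zᵢzⱼzₖzₗ`. -/
def M4 (d : ℕ) (ρ : Measure (Fin d → ℝ)) (z : Fin d → ℝ) : ℝ :=
  ∑ i : Fin d, ∑ j : Fin d, ∑ k : Fin d, ∑ l : Fin d,
    (∫ y, y i * y j * y k * y l ∂ρ) * (z i * z j * z k * z l)

/-- symmetric measure: invariant under `z ↦ -z`. -/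
def SymMeas (d : ℕ) (ρ : Measure (Fin d → ℝ)) : Prop := ρ.map (fun z => -z) = ρ

/-- condition `(*)` : some Gaussian exponential moment. -/
def CondStar (d : ℕ) (ρ : Measure (Fin d → ℝ)) : Prop :=
  ∃ v₀ > (0:ℝ), Integrable (fun z => Real.exp (v₀ * dotProduct z z)) ρ

/-- the ρ-measure of every vector hyperplane is `< 1/√e`. -/
def HypLt (d : ℕ) (ρ : Measure (Fin d → ℝ)) : Prop :=
  ∀ s : Fin d → ℝ, s ≠ 0 →
    ρ {z | dotProduct s z = 0} < ENNReal.ofReal (1 / Real.sqrt (Real.exp 1))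

/-- non-degeneracy: the ρ-measure of every affine hyperplane is `< 1`. -/
def NonDeg (d : ℕ) (ρ : Measure (Fin d → ℝ)) : Prop :=
  ∀ s : Fin d → ℝ, s ≠ 0 → ∀ c : ℝ, ρ {z | dotProduct s z = c} < 1

-- positive square root of a positive semi-definite matrix (junk value otherwise).
open scoped Classical in
def psqrt (d : ℕ) (M : Matrix (Fin d) (Fin d) ℝ) : Matrix (Fin d) (Fin d) ℝ :=
  if h : M.PosSemidef then
    (h.1.eigenvectorUnitary : Matrix (Fin d) (Fin d) ℝ) *
      Matrix.diagonal ((↑) ∘ (√·) ∘ h.1.eigenvalues) *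
      (star h.1.eigenvectorUnitary : Matrix (Fin d) (Fin d) ℝ)
  else 0

/-- Euclidean norm on `ℝ^d`. -/
def vnorm (d : ℕ) (v : Fin d → ℝ) : ℝ := Real.sqrt (dotProduct v v)

/-- Frobenius norm on `d × d` matrices. -/
def mnorm (d : ℕ) (M : Matrix (Fin d) (Fin d) ℝ) : ℝ :=
  Real.sqrt (∑ i : Fin d, ∑ j : Fin d, (M i j) ^ 2)

/-- the log-Laplace transform `Λ` of `(Z, Z ᵗZ)`, with values in `(-∞, +∞]`. -/
def Lam (d : ℕ) (ρ : Measure (Fin d → ℝ)) (u : Fin d → ℝ)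
    (A : Matrix (Fin d) (Fin d) ℝ) : EReal :=
  ENNReal.log (∫⁻ z, ENNReal.ofReal
    (Real.exp (dotProduct u z + dotProduct (A.mulVec z) z)) ∂ρ)

/-- the Cramér transform `I` of `(Z, Z ᵗZ)`. -/
def CramerI (d : ℕ) (ρ : Measure (Fin d → ℝ)) (x : Fin d → ℝ)
    (M : Matrix (Fin d) (Fin d) ℝ) : EReal :=
  ⨆ p : (Fin d → ℝ) × {A : Matrix (Fin d) (Fin d) ℝ // A.IsSymm},
    ((dotProduct x p.1 + (M * (p.2 : Matrix (Fin d) (Fin d) ℝ)).trace : ℝ) : EReal)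
      - Lam d ρ p.1 p.2

end

section AuxLemmas

lemma aux_cosh_lt_exp_half_sq {x : ℝ} (hx : x ≠ 0) : Real.cosh x < Real.exp (x ^ 2 / 2) := by
  have h1 : Real.cosh (x / 2) ≤ Real.exp ((x / 2) ^ 2 / 2) := Real.cosh_le_exp_half_sq _
  have h2 : Real.cosh x = 2 * Real.cosh (x / 2) ^ 2 - 1 := by
    have h := Real.cosh_two_mul (x / 2)
    have h' := Real.cosh_sq (x / 2)
    rw [show 2 * (x / 2) = x by ring] at h
    linarith
  have hc : (0 : ℝ) < Real.cosh (x / 2) := Real.cosh_pos _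
  have h3 : Real.cosh (x / 2) ^ 2 ≤ Real.exp ((x / 2) ^ 2 / 2) ^ 2 :=
    pow_le_pow_left₀ hc.le h1 2
  have he : Real.exp ((x / 2) ^ 2 / 2) ^ 2 = Real.exp (x ^ 2 / 4) := by
    rw [show x ^ 2 / 4 = (x / 2) ^ 2 / 2 + (x / 2) ^ 2 / 2 by ring, Real.exp_add]; ring
  have ht : (1 : ℝ) < Real.exp (x ^ 2 / 4) := by
    rw [Real.one_lt_exp_iff]; positivity
  have he2 : Real.exp (x ^ 2 / 2) = Real.exp (x ^ 2 / 4) ^ 2 := by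
    rw [show x ^ 2 / 2 = x ^ 2 / 4 + x ^ 2 / 4 by ring, Real.exp_add]; ring
  nlinarith [sq_nonneg (Real.exp (x ^ 2 / 4) - 1)]

lemma aux_cosh_mul_exp_le_one (x : ℝ) : Real.cosh x * Real.exp (-(x ^ 2 / 2)) ≤ 1 := by
  have h := Real.cosh_le_exp_half_sq x
  have hp := (Real.exp_pos (-(x ^ 2 / 2))).le
  calc Real.cosh x * Real.exp (-(x ^ 2 / 2)) ≤ Real.exp (x ^ 2 / 2) * Real.exp (-(x ^ 2 / 2)) :=
        mul_le_mul_of_nonneg_right h hp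
    _ = 1 := by rw [← Real.exp_add]; simp

lemma aux_cosh_mul_exp_lt_one {x : ℝ} (hx : x ≠ 0) :
    Real.cosh x * Real.exp (-(x ^ 2 / 2)) < 1 := by
  have h := aux_cosh_lt_exp_half_sq hx
  have hp := Real.exp_pos (-(x ^ 2 / 2))
  calc Real.cosh x * Real.exp (-(x ^ 2 / 2)) < Real.exp (x ^ 2 / 2) * Real.exp (-(x ^ 2 / 2)) :=
        mul_lt_mul_of_pos_right h hp
    _ = 1 := by rw [← Real.exp_add]; simp

end AuxLemmas

/-- for `s ≠ 0`, `∫ exp(⟨s,z⟩ - ⟨s,z⟩²/2) dρ < 1`, i.e.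
`Λ(s, -(1/2) s ᵗs) < 0`. -/
theorem integral_exp_lt_one
    (d : ℕ) (hd : 1 ≤ d) (ρ : Measure (Fin d → ℝ)) [IsProbabilityMeasure ρ]
    (hsym : SymMeas d ρ) (hnd : NonDeg d ρ) (s : Fin d → ℝ) (hs : s ≠ 0) :
    (∫ z, Real.exp (dotProduct s z - (dotProduct s z) ^ 2 / 2) ∂ρ) < 1 ∧
    Lam d ρ s (-((1/2 : ℝ) • Matrix.vecMulVec s s)) < 0 := by
  
  classical
  have hsym' : ρ.map (fun z => -z) = ρ := hsym
  set X : (Fin d → ℝ) → ℝ := fun z => dotProduct s z with hXdef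
  have hXc : Continuous X := by
    simp only [hXdef, dotProduct]
    exact continuous_finset_sum _ fun i _ => continuous_const.mul (continuous_apply i)
  set g : (Fin d → ℝ) → ℝ := fun z => Real.exp (X z - X z ^ 2 / 2) with hgdef
  have hgc : Continuous g :=
    Real.continuous_exp.comp (hXc.sub ((hXc.pow 2).div_const 2))
  set h : (Fin d → ℝ) → ℝ := fun z => Real.cosh (X z) * Real.exp (-(X z ^ 2 / 2)) with hhdef
  have hhc : Continuous h :=
    (Real.continuous_cosh.comp hXc).mul
      (Real.continuous_exp.comp (((hXc.pow 2).div_const 2).neg))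
  have hgi : Integrable g ρ := by
    refine (integrable_const (Real.exp (1 / 2))).mono'
      hgc.aestronglyMeasurable (ae_of_all _ fun z => ?_)
    rw [Real.norm_eq_abs, abs_of_pos (Real.exp_pos _)]
    exact Real.exp_le_exp.2 (by nlinarith [sq_nonneg (X z - 1)])
  have hgni : Integrable (fun z => g (-z)) ρ := by
    refine (integrable_const (Real.exp (1 / 2))).mono'
      ((hgc.comp continuous_neg).aestronglyMeasurable) (ae_of_all _ fun z => ?_)
    rw [Real.norm_eq_abs, abs_of_pos (Real.exp_pos _)]
    exact Real.exp_le_exp.2 (by nlinarith [sq_nonneg (X (-z) - 1)])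
  have hhi : Integrable h ρ := by
    refine (integrable_const (1 : ℝ)).mono'
      hhc.aestronglyMeasurable (ae_of_all _ fun z => ?_)
    rw [Real.norm_eq_abs, abs_of_pos (mul_pos (Real.cosh_pos _) (Real.exp_pos _))]
    exact aux_cosh_mul_exp_le_one _
  have hneg : ∀ z : Fin d → ℝ, X (-z) = -X z := fun z => dotProduct_neg s z
  have hsum : ∀ z, g z + g (-z) = 2 * h z := by
    intro z
    simp only [hgdef, hhdef, hneg, Real.cosh_eq]
    rw [show X z - X z ^ 2 / 2 = X z + -(X z ^ 2 / 2) by ring,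
      show -X z - (-X z) ^ 2 / 2 = -X z + -(X z ^ 2 / 2) by ring,
      Real.exp_add, Real.exp_add]
    ring
  have e1 : ∫ z, g (-z) ∂ρ = ∫ z, g z ∂ρ := by
    nth_rewrite 2 [← hsym']
    rw [integral_map measurable_neg.aemeasurable hgc.aestronglyMeasurable]
  have e2 : ∫ z, h z ∂ρ = ∫ z, g z ∂ρ := by
    have hpt : ∀ z, h z = (g z + g (-z)) / 2 := fun z => by rw [hsum z]; ring
    calc ∫ z, h z ∂ρ = ∫ z, (g z + g (-z)) / 2 ∂ρ := integral_congr_ae (ae_of_all _ hpt)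
      _ = (∫ z, (g z + g (-z)) ∂ρ) / 2 := integral_div 2 _
      _ = ((∫ z, g z ∂ρ) + ∫ z, g (-z) ∂ρ) / 2 := by rw [integral_add hgi hgni]
      _ = ∫ z, g z ∂ρ := by rw [e1]; ring
  have hSm : MeasurableSet {z : Fin d → ℝ | X z = 0} :=
    hXc.measurable (measurableSet_singleton (0 : ℝ))
  have hS1 : ρ {z : Fin d → ℝ | X z = 0} < 1 := hnd s hs 0
  have hcompl : 0 < ρ {z : Fin d → ℝ | X z = 0}ᶜ := by
    rw [prob_compl_eq_one_sub hSm]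
    exact tsub_pos_iff_lt.2 hS1
  set f : (Fin d → ℝ) → ℝ := fun z => 1 - h z with hfdef
  have hfnn : (0 : (Fin d → ℝ) → ℝ) ≤ f := fun z => by
    have := aux_cosh_mul_exp_le_one (X z)
    simp only [hfdef, hhdef, Pi.zero_apply]
    linarith
  have hfi : Integrable f ρ := (integrable_const 1).sub hhi
  have hsupp : Function.support f = {z : Fin d → ℝ | X z = 0}ᶜ := by
    ext z
    simp only [Function.mem_support, Set.mem_compl_iff, Set.mem_setOf_eq, hfdef, hhdef]
    constructor
    · intro hne h0
      apply hne
      rw [h0]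
      simp
    · intro hne h0
      linarith [aux_cosh_mul_exp_lt_one (x := X z) hne]
  have hpos : 0 < ∫ z, f z ∂ρ := by
    rw [integral_pos_iff_support_of_nonneg hfnn hfi, hsupp]
    exact hcompl
  have hfint : ∫ z, f z ∂ρ = 1 - ∫ z, h z ∂ρ := by
    simp only [hfdef]
    rw [integral_sub (integrable_const 1) hhi, integral_const]
    simp
  have hIlt : (∫ z, g z ∂ρ) < 1 := by
    rw [← e2]; linarith
  refine ⟨hIlt, ?_⟩
  have hquad : ∀ z : Fin d → ℝ,
      dotProduct s z +
        dotProduct ((-((1/2 : ℝ) • Matrix.vecMulVec s s)).mulVec z) z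
      = X z - X z ^ 2 / 2 := by
    intro z
    have hv : dotProduct ((Matrix.vecMulVec s s).mulVec z) z = X z * X z := by
      simp only [hXdef, dotProduct, Matrix.mulVec, Matrix.vecMulVec_apply,
        Finset.sum_mul, Finset.mul_sum]
      exact Finset.sum_congr rfl fun i _ => Finset.sum_congr rfl fun j _ => by ring
    rw [Matrix.neg_mulVec, Matrix.smul_mulVec, neg_dotProduct,
      smul_dotProduct, hv, smul_eq_mul]
    simp only [hXdef]
    ring
  have hlint : (∫⁻ z, ENNReal.ofReal
      (Real.exp (dotProduct s z +
        dotProduct ((-((1/2 : ℝ) • Matrix.vecMulVec s s)).mulVec z) z)) ∂ρ)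
      = ENNReal.ofReal (∫ z, g z ∂ρ) := by
    have hcg : (∫⁻ z, ENNReal.ofReal
        (Real.exp (dotProduct s z +
          dotProduct ((-((1/2 : ℝ) • Matrix.vecMulVec s s)).mulVec z) z)) ∂ρ)
        = ∫⁻ z, ENNReal.ofReal (g z) ∂ρ :=
      lintegral_congr fun z => by rw [hquad z]
    rw [hcg,
      ← ofReal_integral_eq_lintegral_ofReal hgi (ae_of_all _ fun z => (Real.exp_pos _).le)]
  have hLam : Lam d ρ s (-((1/2 : ℝ) • Matrix.vecMulVec s s))
      = ENNReal.log (ENNReal.ofReal (∫ z, g z ∂ρ)) := by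
    unfold Lam
    rw [hlint]
  rw [hLam]
  exact ENNReal.log_lt_zero_iff.2 (ENNReal.ofReal_lt_one.2 hIlt)
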